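/- Let α, τ > 0, let u > 0, let x ∈ ℝ, and set m := x e^{−αu} and σ_u² := (τ²/(2α))(1 − e^{−2αu}). Let W be a real Gaussian random variable with mean m and variance σ_u². Let h : ℝ → ℝ be strictly increasing and continuous and satisfy condition [A₊] with parameter b₊ > 0. Then the right tail of the distribution of h(W) is regularly varying at infinity with index −β_{+,u}, where β_{+,u} = 1/(2 b₊ σ_u²) = α/(b₊ τ² (1 − e^{−2αu})); moreover β_{+,u} > β₊ := α/(b₊ τ²). -/

import Mathlib

open MeasureTheory ProbabilityTheory Filter Real Set


lemma integrable_tail (v : ℝ) (hv : 0 < v) :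
    Integrable (fun w : ℝ => Real.exp (-(w^2) / (2*v))) := by
  have : (fun w : ℝ => Real.exp (-(w^2) / (2*v))) =
      fun w : ℝ => Real.exp (-(1/(2*v)) * w^2) := by
    funext w; ring_nf
  rw [this]
  exact integrable_exp_neg_mul_sq (by positivity)

lemma tail_tendsto_zero (v : ℝ) (hv : 0 < v) :
    Tendsto (fun w : ℝ => Real.exp (-(w^2)/(2*v))) atTop (nhds 0) := by
  refine Real.tendsto_exp_atBot.comp ?_
  have h2 : Tendsto (fun w : ℝ => w^2) atTop atTop := tendsto_pow_atTop two_ne_zero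
  have hneg : -(1/(2*v)) < 0 := by
    have h3 : (0:ℝ) < 1/(2*v) := by positivity
    linarith
  have := h2.const_mul_atTop_of_neg hneg
  refine this.congr fun w => by ring

lemma mills_key (v t : ℝ) (hv : 0 < v) :
    ∫ w in Ioi t, w * Real.exp (-(w^2) / (2*v)) = v * Real.exp (-(t^2)/(2*v)) := by
  have hderiv : ∀ w ∈ Ici t, HasDerivAt (fun w : ℝ => -v * Real.exp (-(w^2)/(2*v)))
      (w * Real.exp (-(w^2) / (2*v))) w := by
    intro w _
    have h1 : HasDerivAt (fun w : ℝ => -(w^2)/(2*v)) (-w/v) w := by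
      have := (hasDerivAt_pow 2 w).neg.div_const (2*v)
      refine this.congr_deriv ?_
      field_simp; ring
    have := (h1.exp).const_mul (-v)
    refine this.congr_deriv ?_
    field_simp
  have hint : IntegrableOn (fun w : ℝ => w * Real.exp (-(w^2) / (2*v))) (Ioi t) := by
    have : (fun w : ℝ => w * Real.exp (-(w^2) / (2*v))) =
        fun w : ℝ => w * Real.exp (-(1/(2*v)) * w^2) := by
      funext w; ring_nf
    rw [this]
    exact (integrable_mul_exp_neg_mul_sq (by positivity)).integrableOn
  have htend : Tendsto (fun w : ℝ => -v * Real.exp (-(w^2)/(2*v))) atTop (nhds 0) := by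
    rw [show (0:ℝ) = -v * 0 by ring]
    exact (tail_tendsto_zero v hv).const_mul _
  have := integral_Ioi_of_hasDerivAt_of_tendsto' hderiv hint htend
  rw [this]; ring_nf

lemma mills_upper (v t : ℝ) (hv : 0 < v) (ht : 0 < t) :
    ∫ w in Ioi t, Real.exp (-(w^2) / (2*v)) ≤ v / t * Real.exp (-(t^2) / (2*v)) := by
  calc ∫ w in Ioi t, Real.exp (-(w^2) / (2*v))
      ≤ ∫ w in Ioi t, (1/t) * (w * Real.exp (-(w^2) / (2*v))) := by
        apply setIntegral_mono_on ((integrable_tail v hv).integrableOn)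
        · have : (fun w : ℝ => w * Real.exp (-(w^2) / (2*v))) =
              fun w : ℝ => w * Real.exp (-(1/(2*v)) * w^2) := by
            funext w; ring_nf
          exact (Integrable.const_mul (by rw [this]; exact
            (integrable_mul_exp_neg_mul_sq (by positivity)) ) (1/t)).integrableOn
        · exact measurableSet_Ioi
        · intro w hw
          have h1 : (1:ℝ) ≤ w / t := (one_le_div ht).2 (le_of_lt hw)
          have h2 := Real.exp_pos (-(w^2) / (2*v))
          rw [show (1/t) * (w * Real.exp (-(w^2) / (2*v))) = (w/t) * Real.exp (-(w^2) / (2*v)) by ring]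
          nlinarith
    _ = v / t * Real.exp (-(t^2) / (2*v)) := by
        rw [integral_const_mul, mills_key v t hv]; field_simp


lemma mills_lower (v t : ℝ) (hv : 0 < v) :
    v * t / (v + t^2) * Real.exp (-(t^2) / (2*v)) ≤
      ∫ w in Ioi t, Real.exp (-(w^2) / (2*v)) := by
  set F : ℝ → ℝ := fun w => v * w / (v + w^2) * Real.exp (-(w^2)/(2*v)) with hF
  set G : ℝ → ℝ := fun w => Real.exp (-(w^2)/(2*v)) * (2*v^2/(v+w^2)^2 - 1) with hG
  have hvw : ∀ w : ℝ, v + w^2 ≠ 0 := fun w => by positivity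
  have hderiv : ∀ w ∈ Ici t, HasDerivAt F (G w) w := by
    intro w _
    have h1 : HasDerivAt (fun w : ℝ => v * w / (v + w^2))
        ((v * (v + w^2) - v * w * (2*w)) / (v + w^2)^2) w := by
      have ha : HasDerivAt (fun w : ℝ => v * w) v w := by
        simpa using (hasDerivAt_id w).const_mul v
      have hb : HasDerivAt (fun w : ℝ => v + w^2) (2*w) w := by
        simpa using ((hasDerivAt_pow 2 w).const_add v)
      exact ha.div hb (hvw w)
    have h2 : HasDerivAt (fun w : ℝ => Real.exp (-(w^2)/(2*v)))
        (Real.exp (-(w^2)/(2*v)) * (-w/v)) w := by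
      have h0 : HasDerivAt (fun w : ℝ => -(w^2)/(2*v)) (-w/v) w := by
        have := (hasDerivAt_pow 2 w).neg.div_const (2*v)
        refine this.congr_deriv ?_
        field_simp; ring
      simpa [mul_comm] using h0.exp
    have := h1.mul h2
    refine this.congr_deriv ?_
    rw [hG]
    have h3 := hvw w
    field_simp
    ring
  have hGint : IntegrableOn G (Ioi t) := by
    refine (Integrable.mono' (integrable_tail v hv)
      ?_ (ae_of_all _ fun w => ?_)).integrableOn
    · refine Continuous.aestronglyMeasurable ?_
      fun_prop (disch := intro w; positivity)
    · rw [hG]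
      have e1 : (0:ℝ) < Real.exp (-(w^2)/(2*v)) := Real.exp_pos _
      have h4 : 0 ≤ 2*v^2/(v+w^2)^2 := by positivity
      have h5 : 2*v^2/(v+w^2)^2 ≤ 2 := by
        rw [div_le_iff₀ (by positivity)]
        nlinarith [sq_nonneg (w^2), sq_nonneg w]
      rw [norm_mul, norm_of_nonneg e1.le]
      have : |2*v^2/(v+w^2)^2 - 1| ≤ 1 := by
        rw [abs_le]; constructor <;> linarith
      calc Real.exp (-(w^2)/(2*v)) * ‖2*v^2/(v+w^2)^2 - 1‖
          ≤ Real.exp (-(w^2)/(2*v)) * 1 := by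
            exact mul_le_mul_of_nonneg_left this e1.le
        _ = _ := mul_one _
  have hFtend : Tendsto F atTop (nhds 0) := by
    rw [show (0:ℝ) = 0 * 0 by ring]
    refine Tendsto.mul ?_ (tail_tendsto_zero v hv)
    have key : Tendsto (fun w : ℝ => v / (v/w + w)) atTop (nhds 0) := by
      apply Tendsto.div_atTop (tendsto_const_nhds)
      exact Tendsto.add_atTop (Tendsto.div_atTop tendsto_const_nhds tendsto_id) tendsto_id
    refine key.congr' ?_
    filter_upwards [eventually_gt_atTop 0] with w hw
    field_simp
  have heq := integral_Ioi_of_hasDerivAt_of_tendsto' hderiv hGint hFtend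
  have hneg : ∫ w in Ioi t, -G w = F t := by
    rw [integral_neg, heq]; ring
  have hle : ∫ w in Ioi t, -G w ≤ ∫ w in Ioi t, Real.exp (-(w^2) / (2*v)) := by
    apply setIntegral_mono_on hGint.neg ((integrable_tail v hv).integrableOn)
      measurableSet_Ioi
    intro w _
    simp only [Pi.neg_apply, hG]
    have e1 : (0:ℝ) < Real.exp (-(w^2)/(2*v)) := Real.exp_pos _
    have h4 : 0 ≤ 2*v^2/(v+w^2)^2 := by positivity
    nlinarith
  rw [hF] at hneg
  simp only at hneg
  linarith [hneg ▸ hle]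


lemma tail_ratio (v c : ℝ) (hv : 0 < v) (s t : ℝ → ℝ)
    (hts : Tendsto t atTop atTop) (hss : Tendsto s atTop atTop)
    (hdiff : Tendsto (fun y => s y - t y) atTop (nhds 0))
    (hsq : Tendsto (fun y => (s y)^2 - (t y)^2) atTop (nhds c)) :
    Tendsto (fun y => (∫ w in Ioi (s y), Real.exp (-(w^2)/(2*v))) /
        (∫ w in Ioi (t y), Real.exp (-(w^2)/(2*v)))) atTop
      (nhds (Real.exp (-c/(2*v)))) := by
  have hst : Tendsto (fun y => t y / s y) atTop (nhds 1) := by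
    have h2 : Tendsto (fun y => (s y - t y) / s y) atTop (nhds 0) :=
      hdiff.div_atTop hss
    have h3 : Tendsto (fun y => 1 - (s y - t y) / s y) atTop (nhds 1) := by
      simpa using (tendsto_const_nhds (x := (1:ℝ))).sub h2
    refine h3.congr' ?_
    filter_upwards [hss.eventually_gt_atTop 0] with y hy
    field_simp; ring
  have hE : Tendsto (fun y => Real.exp (-((s y)^2 - (t y)^2)/(2*v))) atTop
      (nhds (Real.exp (-c/(2*v)))) := by
    refine (Real.continuous_exp.tendsto _).comp ?_
    have := (hsq.neg).div_const (2*v)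
    refine this.congr fun y => by ring
  -- factor limits
  have hA : Tendsto (fun y => s y * t y / (v + (s y)^2)) atTop (nhds 1) := by
    have hs2 : Tendsto (fun y => v + (s y)^2) atTop atTop :=
      tendsto_atTop_add_const_left _ _ ((tendsto_pow_atTop two_ne_zero).comp hss)
    have hfrac : Tendsto (fun y => v / (v + (s y)^2)) atTop (nhds 0) :=
      tendsto_const_nhds.div_atTop hs2
    have h4 : Tendsto (fun y => (t y / s y) * (1 - v / (v + (s y)^2))) atTop (nhds 1) := by
      have := hst.mul ((tendsto_const_nhds (x := (1:ℝ))).sub hfrac)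
      simpa using this
    refine h4.congr' ?_
    filter_upwards [hss.eventually_gt_atTop 0] with y hy
    have h5 : v + (s y)^2 ≠ 0 := by positivity
    field_simp
    ring
  have hB : Tendsto (fun y => (v + (t y)^2) / (s y * t y)) atTop (nhds 1) := by
    have ht2 : Tendsto (fun y => (t y)^2) atTop atTop :=
      (tendsto_pow_atTop two_ne_zero).comp hts
    have hfrac : Tendsto (fun y => v / (t y)^2) atTop (nhds 0) :=
      tendsto_const_nhds.div_atTop ht2
    have h4 : Tendsto (fun y => (t y / s y) * (v / (t y)^2 + 1)) atTop (nhds 1) := by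
      have := hst.mul (hfrac.add (tendsto_const_nhds (x := (1:ℝ))))
      simpa using this
    refine h4.congr' ?_
    filter_upwards [hss.eventually_gt_atTop 0, hts.eventually_gt_atTop 0] with y hy hy'
    field_simp
  have hLo : Tendsto (fun y => (s y * t y / (v + (s y)^2)) *
      Real.exp (-((s y)^2 - (t y)^2)/(2*v))) atTop (nhds (Real.exp (-c/(2*v)))) := by
    simpa using hA.mul hE
  have hUp : Tendsto (fun y => ((v + (t y)^2) / (s y * t y)) *
      Real.exp (-((s y)^2 - (t y)^2)/(2*v))) atTop (nhds (Real.exp (-c/(2*v)))) := by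
    simpa using hB.mul hE
  refine tendsto_of_tendsto_of_tendsto_of_le_of_le' hLo hUp ?_ ?_
  · -- Lo ≤ ratio
    filter_upwards [hss.eventually_gt_atTop 0, hts.eventually_gt_atTop 0] with y hsy hty
    have hL := mills_lower v (s y) hv
    have hU := mills_upper v (t y) hv hty
    have hDpos : 0 < ∫ w in Ioi (t y), Real.exp (-(w^2)/(2*v)) := by
      refine lt_of_lt_of_le ?_ (mills_lower v (t y) hv)
      positivity
    have hNnonneg : 0 ≤ ∫ w in Ioi (s y), Real.exp (-(w^2)/(2*v)) := by
      refine setIntegral_nonneg measurableSet_Ioi fun w _ => (Real.exp_pos _).le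
    have key : (s y * t y / (v + (s y)^2)) * Real.exp (-((s y)^2 - (t y)^2)/(2*v)) =
        (v * s y / (v + (s y)^2) * Real.exp (-((s y)^2) / (2*v))) /
          (v / t y * Real.exp (-((t y)^2) / (2*v))) := by
      rw [show -((s y)^2 - (t y)^2)/(2*v) = (-((s y)^2)/(2*v)) - (-((t y)^2)/(2*v)) by ring,
        Real.exp_sub]
      have h5 : v + (s y)^2 ≠ 0 := by positivity
      have h6 := (Real.exp_pos (-((t y)^2)/(2*v))).ne'
      field_simp
    rw [key]
    exact div_le_div₀ hNnonneg hL hDpos hU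
  · -- ratio ≤ Up
    filter_upwards [hss.eventually_gt_atTop 0, hts.eventually_gt_atTop 0] with y hsy hty
    have hU := mills_upper v (s y) hv hsy
    have hL := mills_lower v (t y) hv
    have hDlow : (0:ℝ) < v * t y / (v + (t y)^2) * Real.exp (-((t y)^2) / (2*v)) := by
      positivity
    have key : ((v + (t y)^2) / (s y * t y)) * Real.exp (-((s y)^2 - (t y)^2)/(2*v)) =
        (v / s y * Real.exp (-((s y)^2) / (2*v))) /
          (v * t y / (v + (t y)^2) * Real.exp (-((t y)^2) / (2*v))) := by
      rw [show -((s y)^2 - (t y)^2)/(2*v) = (-((s y)^2)/(2*v)) - (-((t y)^2)/(2*v)) by ring,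
        Real.exp_sub]
      have h5 : v + (t y)^2 ≠ 0 := by positivity
      have h6 := (Real.exp_pos (-((t y)^2)/(2*v))).ne'
      field_simp
    rw [key]
    have hUnonneg : (0:ℝ) ≤ v / s y * Real.exp (-((s y)^2) / (2*v)) := by positivity
    exact div_le_div₀ hUnonneg hU hDlow hL


lemma mvt_bound (f : ℝ → ℝ) (hf : Differentiable ℝ f) (ε Z a c : ℝ) (hε : 0 ≤ ε)
    (hbound : ∀ z, Z ≤ z → |deriv f z| ≤ ε * z) (hZ : 0 ≤ Z) (ha : Z ≤ a) (hc : Z ≤ c) :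
    |f c - f a| ≤ ε * (a + c) * |c - a| := by
  have hsub : uIcc a c ⊆ Ici Z := by
    intro ξ hξ
    have := hξ.1
    simp only [mem_Ici]
    calc Z ≤ min a c := le_min ha hc
      _ ≤ ξ := hξ.1
  have key := Convex.norm_image_sub_le_of_norm_deriv_le
    (fun x _ => hf x) (C := ε * (a + c)) ?_ (convex_uIcc a c)
    (left_mem_uIcc (a := a) (b := c)) (right_mem_uIcc (a := a) (b := c))
  · simpa [Real.norm_eq_abs] using key
  · intro ξ hξ
    have h1 : Z ≤ ξ := hsub hξ
    have h2 : ξ ≤ max a c := (le_max_iff).2 (by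
      rcases le_total a c with hac | hac
      · right; rw [uIcc_of_le hac] at hξ; exact hξ.2
      · left; rw [uIcc_of_ge hac] at hξ; exact hξ.2)
    have h3 : max a c ≤ a + c := by
      rcases le_total a c with hac | hac
      · rw [max_eq_right hac]; linarith
      · rw [max_eq_left hac]; linarith
    calc ‖deriv f ξ‖ = |deriv f ξ| := rfl
      _ ≤ ε * ξ := hbound ξ h1
      _ ≤ ε * (a + c) := by nlinarith


lemma deriv_eventually_bound (f : ℝ → ℝ)
    (hf' : Tendsto (fun z => deriv f z / z) atTop (nhds 0)) (ε : ℝ) (hε : 0 < ε) :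
    ∃ Z : ℝ, 1 ≤ Z ∧ ∀ z, Z ≤ z → |deriv f z| ≤ ε * z := by
  have h1 : ∀ᶠ z in atTop, |deriv f z / z| < ε := by
    have := hf'.abs
    simp only [abs_zero] at this
    exact this.eventually_lt_const hε
  rw [eventually_atTop] at h1
  obtain ⟨Z₀, hZ₀⟩ := h1
  refine ⟨max Z₀ 1, le_max_right _ _, fun z hz => ?_⟩
  have hz1 : (1:ℝ) ≤ z := le_trans (le_max_right _ _) hz
  have hz0 : (0:ℝ) < z := by linarith
  have := hZ₀ z (le_trans (le_max_left _ _) hz)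
  rw [abs_div, abs_of_pos hz0, div_lt_iff₀ hz0] at this
  linarith

lemma sq_diff_tendsto (b : ℝ) (hb : 0 < b) (f r : ℝ → ℝ) (hf : Differentiable ℝ f)
    (hf' : Tendsto (fun z => deriv f z / z) atTop (nhds 0))
    (hr : Tendsto r atTop (nhds 0))
    (s t : ℝ → ℝ) (hs : Tendsto s atTop atTop) (ht : Tendsto t atTop atTop)
    (c : ℝ)
    (heq : ∀ᶠ y in atTop,
      b*(s y)^2 + f (s y) + r (s y) = c + (b*(t y)^2 + f (t y) + r (t y))) :
    Tendsto (fun y => s y - t y) atTop (nhds 0) ∧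
    Tendsto (fun y => (s y)^2 - (t y)^2) atTop (nhds (c / b)) := by
  set L : ℝ → ℝ := fun y => c + r (t y) - r (s y) with hLdef
  have hL : Tendsto L atTop (nhds c) := by
    have h1 := (hr.comp ht).sub (hr.comp hs)
    have h2 := (tendsto_const_nhds (x := c)).add h1
    simp only [add_zero, sub_zero, sub_self] at h2
    refine h2.congr fun y => by simp [hLdef]; ring
  have hLbd : ∀ᶠ y in atTop, |L y| ≤ |c| + 1 := by
    exact hL.abs.eventually_le_const (show |c| < |c| + 1 by linarith)
  have heq' : ∀ᶠ y in atTop, b*((s y)^2 - (t y)^2) + (f (s y) - f (t y)) = L y := by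
    filter_upwards [heq] with y hy
    simp only [hLdef]; linarith
  -- bound on |s - t| using ε = b/2
  obtain ⟨Z, hZ1, hZb⟩ := deriv_eventually_bound f hf' (b/2) (by linarith)
  have hbase : ∀ᶠ y in atTop, |s y - t y| ≤ 2 * |L y| / (b * (s y + t y)) ∧
      Z ≤ s y ∧ Z ≤ t y := by
    filter_upwards [heq', hs.eventually_ge_atTop Z, ht.eventually_ge_atTop Z]
      with y hy hsZ htZ
    refine ⟨?_, hsZ, htZ⟩
    have hmvt := mvt_bound f hf (b/2) Z (t y) (s y) (by linarith)
      hZb (by linarith) htZ hsZ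
    have hsum : 0 < s y + t y := by linarith
    have habs : b * (s y + t y) * |s y - t y| = |b*((s y)^2 - (t y)^2)| := by
      rw [abs_mul, abs_of_pos hb, show (s y)^2 - (t y)^2 = (s y + t y) * (s y - t y) by ring,
        abs_mul, abs_of_pos hsum]
      ring
    have h2 : |b*((s y)^2 - (t y)^2)| ≤ |L y| + (b/2) * (s y + t y) * |s y - t y| := by
      have := abs_sub_abs_le_abs_sub (b*((s y)^2 - (t y)^2)) (L y)
      have h3 : |b*((s y)^2 - (t y)^2) - L y| = |f (s y) - f (t y)| := by
        rw [show b*((s y)^2 - (t y)^2) - L y = -(f (s y) - f (t y)) by linarith, abs_neg]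
      calc |b*((s y)^2 - (t y)^2)| ≤ |L y| + |b*((s y)^2 - (t y)^2) - L y| := by
            have := abs_sub_abs_le_abs_sub (b*((s y)^2 - (t y)^2)) (L y); linarith [abs_nonneg (b*((s y)^2 - (t y)^2) - L y)]
        _ = |L y| + |f (s y) - f (t y)| := by rw [h3]
        _ ≤ |L y| + (b/2) * (t y + s y) * |s y - t y| := by
            have := hmvt
            rw [show |s y - t y| = |s y - t y| from rfl]
            linarith [hmvt]
        _ = |L y| + (b/2) * (s y + t y) * |s y - t y| := by ring_nf
    rw [le_div_iff₀ (by positivity)]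
    nlinarith [abs_nonneg (s y - t y), abs_nonneg (L y)]
  have hdiff : Tendsto (fun y => s y - t y) atTop (nhds 0) := by
    rw [NormedAddCommGroup.tendsto_nhds_zero]
    intro δ hδ
    have hbd : Tendsto (fun y => 2 * (|c| + 1) / (b * t y)) atTop (nhds 0) := by
      refine Tendsto.div_atTop tendsto_const_nhds ?_
      exact (ht.const_mul_atTop hb)
    have := hbd.eventually_lt_const hδ
    filter_upwards [this, hbase, hLbd, hs.eventually_gt_atTop 0, ht.eventually_gt_atTop 0]
      with y h1 h2 h3 h4 h5
    rw [Real.norm_eq_abs]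
    calc |s y - t y| ≤ 2 * |L y| / (b * (s y + t y)) := h2.1
      _ ≤ 2 * (|c| + 1) / (b * t y) := by
          apply div_le_div₀ (by positivity) (by linarith [abs_nonneg (L y)]) (by positivity)
          nlinarith
      _ < δ := h1
  refine ⟨hdiff, ?_⟩
  -- f (s y) - f (t y) → 0
  have hfd : Tendsto (fun y => f (s y) - f (t y)) atTop (nhds 0) := by
    rw [NormedAddCommGroup.tendsto_nhds_zero]
    intro δ hδ
    set ε : ℝ := min (b/2) (δ * b / (8 * (|c| + 1))) with hεdef
    have hεpos : 0 < ε := by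
      apply lt_min (by linarith)
      have : 0 < |c| + 1 := by positivity
      positivity
    obtain ⟨Z', hZ'1, hZ'b⟩ := deriv_eventually_bound f hf' ε hεpos
    filter_upwards [hbase, hLbd, hs.eventually_ge_atTop Z', ht.eventually_ge_atTop Z',
      hs.eventually_gt_atTop 0, ht.eventually_gt_atTop 0] with y h2 h3 hsZ' htZ' h4 h5
    rw [Real.norm_eq_abs]
    have hmvt := mvt_bound f hf ε Z' (t y) (s y) hεpos.le hZ'b (by linarith) htZ' hsZ'
    have hsum : 0 < s y + t y := by linarith
    have hc1 : (0:ℝ) < |c| + 1 := by positivity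
    calc |f (s y) - f (t y)| ≤ ε * (t y + s y) * |s y - t y| := hmvt
      _ ≤ ε * (t y + s y) * (2 * |L y| / (b * (s y + t y))) := by
          apply mul_le_mul_of_nonneg_left h2.1 (by positivity)
      _ = 2 * ε * |L y| / b := by field_simp; ring
      _ ≤ 2 * ε * (|c| + 1) / b := by
          gcongr
      _ < δ := by
          have hε2 : ε ≤ δ * b / (8 * (|c| + 1)) := min_le_right _ _
          rw [div_lt_iff₀ hb]
          calc 2 * ε * (|c| + 1) ≤ 2 * (δ * b / (8 * (|c| + 1))) * (|c| + 1) := by nlinarith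
            _ = δ * b / 4 := by field_simp; ring
            _ < δ * b := by nlinarith
  -- conclude
  have hmain : Tendsto (fun y => (L y - (f (s y) - f (t y))) / b) atTop (nhds (c / b)) := by
    have := (hL.sub hfd).div_const b
    rw [show (c - 0)/b = c/b by ring] at this
    exact this
  refine hmain.congr' ?_
  filter_upwards [heq'] with y hy
  field_simp
  linarith


lemma shift_integral (v m a : ℝ) :
    ∫ w in Ioi a, Real.exp (-((w - m)^2) / (2*v)) =
      ∫ w in Ioi (a - m), Real.exp (-(w^2)/(2*v)) := by
  have hmp : MeasurePreserving (fun x : ℝ => x + m) volume volume :=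
    measurePreserving_add_right volume m
  have hemb : MeasurableEmbedding (fun x : ℝ => x + m) :=
    measurableEmbedding_addRight m
  have := hmp.setIntegral_preimage_emb hemb
    (fun w => Real.exp (-((w - m)^2) / (2*v))) (Ioi a)
  rw [preimage_add_const_Ioi] at this
  rw [← this]
  congr 1
  funext x
  ring_nf


/-- If `W` has the time-`u` transition law of the OU process
`dX_t = -α X_t dt + τ dW_t` started at `x`, i.e. `W ~ N(x e^{-αu}, σ_u²)` with
`σ_u² = (τ²/(2α))(1 - e^{-2αu})`, and `h` is strictly increasing, continuous
and satisfies [A₊] with parameter `b > 0`, then the right tail of the law of `h(W)`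
is regularly varying with index `-β_{+,u}` where
`β_{+,u} = 1/(2bσ_u²) = α/(bτ²(1-e^{-2αu})) > β₊ = α/(bτ²)`. -/
theorem transformed_OU_transition_right_tail_regularly_varying
    {Ω : Type*} [MeasurableSpace Ω] (μ : Measure Ω) [IsProbabilityMeasure μ]
    (α τ u x : ℝ) (hα : 0 < α) (hτ : 0 < τ) (hu : 0 < u)
    (su2 : ℝ) (hsu2 : su2 = τ ^ 2 / (2 * α) * (1 - Real.exp (-(2 * α * u))))
    (W : Ω → ℝ) (hWmeas : Measurable W)
    (hWlaw : μ.map W = gaussianReal (x * Real.exp (-(α * u))) su2.toNNReal)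
    (h : ℝ → ℝ) (hmono : StrictMono h) (hcont : Continuous h)
    (b : ℝ) (hb : 0 < b)
    (f r : ℝ → ℝ)
    (hf : Differentiable ℝ f)
    (hf' : Tendsto (fun z => deriv f z / z) atTop (nhds 0))
    (hr : Tendsto r atTop (nhds 0))
    (hrep : ∀ᶠ z in atTop, h z = Real.exp (b * z ^ 2 + f z + r z)) :
    (∀ l : ℝ, 0 < l →
      Tendsto
        (fun y => (μ {ω | h (W ω) > l * y}).toReal / (μ {ω | h (W ω) > y}).toReal)
        atTop (nhds (l ^ (-(1 / (2 * b * su2)))))) ∧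
    1 / (2 * b * su2) = α / (b * τ ^ 2 * (1 - Real.exp (-(2 * α * u)))) ∧
    1 / (2 * b * su2) > α / (b * τ ^ 2) := by
  classical
  have hE1 : Real.exp (-(2 * α * u)) < 1 := by
    rw [Real.exp_lt_one_iff]
    have : 0 < 2 * α * u := by positivity
    linarith
  have hEpos : 0 < 1 - Real.exp (-(2 * α * u)) := by linarith
  have hv : 0 < su2 := by rw [hsu2]; positivity
  set m : ℝ := x * Real.exp (-(α * u)) with hm
  have hvnn : (su2.toNNReal : ℝ) = su2 := Real.coe_toNNReal _ hv.le
  have hvn0 : su2.toNNReal ≠ 0 := by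
    intro hcon
    rw [hcon] at hvnn
    simp at hvnn
    exact absurd hvnn.symm hv.ne'
  -- algebraic parts
  have halg : 1 / (2 * b * su2) = α / (b * τ ^ 2 * (1 - Real.exp (-(2 * α * u)))) := by
    rw [hsu2]
    field_simp
  refine ⟨?_, halg, ?_⟩
  swap
  · rw [halg]
    apply div_lt_div_of_pos_left hα (mul_pos (by positivity) hEpos)
    nlinarith [Real.exp_pos (-(2 * α * u)), mul_pos (mul_pos hb (pow_pos hτ 2)) (Real.exp_pos (-(2 * α * u)))]
  -- h tends to infinity
  obtain ⟨Z₀, hZ₀1, hZ₀b⟩ := deriv_eventually_bound f hf' (b/2) (by linarith)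
  have hφtop : Tendsto (fun z => b * z ^ 2 + f z + r z) atTop atTop := by
    have hlow : ∀ᶠ z in atTop, (b/2) * z^2 + (f Z₀ - (b/2)*Z₀^2 - 1) ≤
        b * z ^ 2 + f z + r z := by
      filter_upwards [eventually_ge_atTop Z₀, (hr.eventually_const_lt (show (-1:ℝ) < 0 by norm_num))] with z hz hrz
      have hmvt := mvt_bound f hf (b/2) Z₀ Z₀ z (by linarith) hZ₀b
        (by linarith) le_rfl hz
      have : |f z - f Z₀| ≤ (b/2) * (z^2 - Z₀^2) := by
        calc |f z - f Z₀| ≤ (b/2) * (Z₀ + z) * |z - Z₀| := hmvt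
          _ = (b/2) * (z^2 - Z₀^2) := by
              rw [abs_of_nonneg (show (0:ℝ) ≤ z - Z₀ by linarith)]; ring
      have h2 := abs_le.1 this
      nlinarith
    refine tendsto_atTop_mono' _ hlow ?_
    apply tendsto_atTop_add_const_right
    exact ((tendsto_pow_atTop two_ne_zero).const_mul_atTop (by linarith))
  have htop : Tendsto h atTop atTop := by
    refine Tendsto.congr' ?_ (Real.tendsto_exp_atTop.comp hφtop)
    filter_upwards [hrep] with z hz
    exact hz.symm
  -- the inverse function g
  set g : ℝ → ℝ := fun y => if hy : ∃ z, h z = y then hy.choose else 0 with hgdef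
  have hginv : ∀ y : ℝ, (∃ z, h z = y) → h (g y) = y := by
    intro y hy
    simp only [hgdef, dif_pos hy]
    exact hy.choose_spec
  have hsurj : ∀ y : ℝ, h 0 ≤ y → ∃ z, h z = y := by
    intro y hy
    obtain ⟨z₀, hz₀, hz₀0⟩ := ((htop.eventually_ge_atTop y).and (eventually_ge_atTop 0)).exists
    have := intermediate_value_Icc hz₀0 hcont.continuousOn
    obtain ⟨z, _, hz⟩ := this ⟨hy, hz₀⟩
    exact ⟨z, hz⟩
  have hgev : ∀ᶠ y in atTop, h (g y) = y := by
    filter_upwards [eventually_ge_atTop (h 0)] with y hy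
    exact hginv y (hsurj y hy)
  have hgtop : Tendsto g atTop atTop := by
    rw [tendsto_atTop]
    intro M
    filter_upwards [hgev, eventually_gt_atTop (h M)] with y h1 h2
    by_contra hc'
    push_neg at hc'
    have := hmono hc'
    rw [h1] at this
    linarith
  -- main limit
  intro l hl
  have hlty : Tendsto (fun y => l * y) atTop atTop :=
    (tendsto_id.const_mul_atTop hl)
  set sf : ℝ → ℝ := fun y => g (l * y) with hsfdef
  have hsftop : Tendsto sf atTop atTop := hgtop.comp hlty
  have hsgev : ∀ᶠ y in atTop, h (sf y) = l * y := by
    have := hlty.eventually hgev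
    exact this
  -- the logarithmic equation
  obtain ⟨Zr, hZr⟩ := eventually_atTop.1 hrep
  have heqn : ∀ᶠ y in atTop,
      b * (sf y)^2 + f (sf y) + r (sf y) = Real.log l + (b * (g y)^2 + f (g y) + r (g y)) := by
    filter_upwards [hgev, hsgev, hsftop.eventually_ge_atTop Zr,
      hgtop.eventually_ge_atTop Zr, eventually_gt_atTop 0] with y h1 h2 h3 h4 h5
    have e1 : Real.exp (b * (sf y)^2 + f (sf y) + r (sf y)) = l * y := by
      rw [← hZr (sf y) h3]; exact h2
    have e2 : Real.exp (b * (g y)^2 + f (g y) + r (g y)) = y := by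
      rw [← hZr (g y) h4]; exact h1
    have hlog1 : b * (sf y)^2 + f (sf y) + r (sf y) = Real.log (l * y) := by
      have := congrArg Real.log e1
      rwa [Real.log_exp] at this
    have hlog2 : b * (g y)^2 + f (g y) + r (g y) = Real.log y := by
      have := congrArg Real.log e2
      rwa [Real.log_exp] at this
    rw [hlog1, hlog2, Real.log_mul hl.ne' h5.ne']
  obtain ⟨hdiff, hsq⟩ := sq_diff_tendsto b hb f r hf hf' hr sf g hsftop hgtop
    (Real.log l) heqn
  -- measure identity
  have hPy : ∀ y : ℝ, h 0 ≤ y → (μ {ω | h (W ω) > y}).toReal =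
      (Real.sqrt (2 * π * su2))⁻¹ * ∫ w in Ioi (g y - m), Real.exp (-(w^2)/(2*su2)) := by
    intro y hy
    have hgy := hginv y (hsurj y hy)
    have hset : {w : ℝ | h w > y} = Ioi (g y) := by
      ext w
      simp only [mem_setOf_eq, mem_Ioi, gt_iff_lt]
      constructor
      · intro hw
        apply hmono.lt_iff_lt.mp
        rw [hgy]
        exact hw
      · intro hw
        rw [← hgy]
        exact hmono hw
    have h1 : {ω | h (W ω) > y} = W ⁻¹' {w | h w > y} := rfl
    rw [h1, ← Measure.map_apply hWmeas (by rw [hset]; exact measurableSet_Ioi), hWlaw,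
      gaussianReal_apply_eq_integral _ hvn0 _, hset]
    rw [ENNReal.toReal_ofReal (setIntegral_nonneg measurableSet_Ioi
      fun w _ => gaussianPDFReal_nonneg _ _ _)]
    have hpdf : ∀ w : ℝ, gaussianPDFReal m su2.toNNReal w =
        (Real.sqrt (2 * π * su2))⁻¹ * Real.exp (-((w - m)^2) / (2*su2)) := by
      intro w
      rw [gaussianPDFReal, hvnn]
    simp_rw [hpdf]
    rw [integral_const_mul, shift_integral]
  -- ratio rewriting and conclusion
  have hC : (0:ℝ) < (Real.sqrt (2 * π * su2))⁻¹ := by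
    have : (0:ℝ) < 2 * π * su2 := by positivity
    positivity
  have hratio : ∀ᶠ y in atTop,
      (μ {ω | h (W ω) > l * y}).toReal / (μ {ω | h (W ω) > y}).toReal =
        (∫ w in Ioi (sf y - m), Real.exp (-(w^2)/(2*su2))) /
          (∫ w in Ioi (g y - m), Real.exp (-(w^2)/(2*su2))) := by
    filter_upwards [eventually_ge_atTop (h 0), hlty.eventually_ge_atTop (h 0)] with y h1 h2
    rw [hPy y h1, hPy (l*y) h2]
    rw [mul_div_mul_left _ _ hC.ne']
  have hstop : Tendsto (fun y => sf y - m) atTop atTop :=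
    tendsto_atTop_add_const_right _ _ hsftop
  have httop : Tendsto (fun y => g y - m) atTop atTop :=
    tendsto_atTop_add_const_right _ _ hgtop
  have hdiff' : Tendsto (fun y => (sf y - m) - (g y - m)) atTop (nhds 0) := by
    refine hdiff.congr fun y => by ring
  have hsq' : Tendsto (fun y => (sf y - m)^2 - (g y - m)^2) atTop
      (nhds (Real.log l / b)) := by
    have := hsq.sub (hdiff.const_mul (2*m))
    rw [show Real.log l / b - 2*m*0 = Real.log l / b by ring] at this
    refine this.congr fun y => by ring
  have hmain := tail_ratio su2 (Real.log l / b) hv _ _ httop hstop hdiff' hsq'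
  have hexp : -(Real.log l / b)/(2*su2) = Real.log l * (-(1 / (2 * b * su2))) := by
    ring
  have hfinal : Real.exp (-(Real.log l / b)/(2*su2)) = l ^ (-(1 / (2 * b * su2))) := by
    rw [Real.rpow_def_of_pos hl, hexp]
  rw [hfinal] at hmain
  exact Tendsto.congr' (hratio.mono fun y hy => hy.symm) hmain
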